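/- Let D be a triangle in ℝ² with the origin as interior point and vertices p=(p₁,p₂), q=(q₁,q₂), r=(r₁,r₂) (in counterclockwise order), and let F be the gauge whose unit disk is D. Then the unit disk of the associated gauge F_a is the set {x : p₁x₂ − p₂x₁ ≤ 1, q₁x₂ − q₂x₁ ≤ 1, r₁x₂ − r₂x₁ ≤ 1}, a triangle with vertices (q−p)/(p₁q₂−p₂q₁), (r−q)/(q₁r₂−q₂r₁), and (p−r)/(r₁p₂−r₂p₁). -/

import Mathlib

open Pointwise

noncomputable section

/-- The determinant form `[x,y] = x₁y₂ − x₂y₁`. -/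
def det2 (x y : ℝ × ℝ) : ℝ := x.1 * y.2 - x.2 * y.1

/-- A gauge (convex distance function) on ℝ². -/
def IsGauge (F : ℝ × ℝ → ℝ) : Prop :=
  (∀ x, 0 ≤ F x) ∧ (∀ x, F x = 0 ↔ x = 0) ∧
  (∀ (l : ℝ) (x : ℝ × ℝ), 0 < l → F (l • x) = l * F x) ∧
  (∀ x y, F (x + y) ≤ F x + F y)

/-- The associated gauge `F_a(x) = sup {[y,x] : F(y) = 1}`. -/
def assocGauge (F : ℝ × ℝ → ℝ) (x : ℝ × ℝ) : ℝ :=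
  sSup {d : ℝ | ∃ y, F y = 1 ∧ d = det2 y x}

/-- The gauge (Minkowski functional) of a convex body `D` with `0` in its interior. -/
def gaugeOf (D : Set (ℝ × ℝ)) (x : ℝ × ℝ) : ℝ := sInf {l : ℝ | 0 < l ∧ x ∈ l • D}

lemma gaugeOf_eq_gauge (D : Set (ℝ × ℝ)) : gaugeOf D = gauge D := rfl

lemma det2_linear (w : ℝ × ℝ) : IsLinearMap ℝ (fun y : ℝ × ℝ => det2 y w) := by
  constructor <;> intros <;>
    simp only [det2, Prod.fst_add, Prod.snd_add, Prod.smul_fst, Prod.smul_snd, smul_eq_mul] <;>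
    ring

lemma det2_smul_left (b : ℝ) (y w : ℝ × ℝ) : det2 (b • y) w = b * det2 y w := by
  simp only [det2, Prod.smul_fst, Prod.smul_snd, smul_eq_mul]; ring

lemma gauge_vertex {D : Set (ℝ × ℝ)} (hnhds : D ∈ nhds 0) {v w : ℝ × ℝ}
    (hv : v ∈ D) (hub : ∀ y ∈ D, det2 y w ≤ det2 v w) (hpos : 0 < det2 v w) :
    gauge D v = 1 := by
  refine le_antisymm (gauge_le_one_of_mem hv) ?_
  by_contra h
  push_neg at h
  obtain ⟨b, hb0, hb1, hmem⟩ := exists_lt_of_gauge_lt (absorbent_nhds_zero hnhds) h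
  obtain ⟨y, hy, hyv⟩ := hmem
  have h1 : det2 v w = b * det2 y w := by rw [← hyv, det2_smul_left]
  nlinarith [hub y hy]

set_option maxHeartbeats 1000000 in
theorem triangle_assocGauge_unit_disk (p q r : ℝ × ℝ)
    (h0 : (0 : ℝ × ℝ) ∈ interior (convexHull ℝ {p, q, r}))
    (hccw : det2 p q > 0 ∧ det2 q r > 0 ∧ det2 r p > 0) :
    {x : ℝ × ℝ | assocGauge (gaugeOf (convexHull ℝ {p, q, r})) x ≤ 1} =
      {x : ℝ × ℝ | p.1 * x.2 - p.2 * x.1 ≤ 1 ∧ q.1 * x.2 - q.2 * x.1 ≤ 1 ∧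
        r.1 * x.2 - r.2 * x.1 ≤ 1} ∧
    {x : ℝ × ℝ | p.1 * x.2 - p.2 * x.1 ≤ 1 ∧ q.1 * x.2 - q.2 * x.1 ≤ 1 ∧
        r.1 * x.2 - r.2 * x.1 ≤ 1} =
      convexHull ℝ {(1 / (p.1 * q.2 - p.2 * q.1)) • (q - p),
        (1 / (q.1 * r.2 - q.2 * r.1)) • (r - q),
        (1 / (r.1 * p.2 - r.2 * p.1)) • (p - r)} := by
  obtain ⟨hA, hB, hC⟩ := hccw
  have hA' : (0:ℝ) < p.1 * q.2 - p.2 * q.1 := hA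
  have hB' : (0:ℝ) < q.1 * r.2 - q.2 * r.1 := hB
  have hC' : (0:ℝ) < r.1 * p.2 - r.2 * p.1 := hC
  have hA0 : (p.1 * q.2 - p.2 * q.1) ≠ 0 := ne_of_gt hA'
  have hB0 : (q.1 * r.2 - q.2 * r.1) ≠ 0 := ne_of_gt hB'
  have hC0 : (r.1 * p.2 - r.2 * p.1) ≠ 0 := ne_of_gt hC'
  set D := convexHull ℝ ({p, q, r} : Set (ℝ × ℝ)) with hD
  have hconv : Convex ℝ D := convex_convexHull ℝ _
  have hclosed : IsClosed D := ((Set.toFinite {p, q, r}).isCompact_convexHull (𝕜 := ℝ)).isClosed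
  have hnhds : D ∈ nhds (0 : ℝ × ℝ) := mem_interior_iff_mem_nhds.mp h0
  have hmemD : ∀ y, gauge D y ≤ 1 ↔ y ∈ D := by
    intro y
    rw [gauge_le_one_iff_mem_closure hconv hnhds, hclosed.closure_eq]
  have hpD : p ∈ D := subset_convexHull ℝ _ (by simp)
  have hqD : q ∈ D := subset_convexHull ℝ _ (by simp)
  have hrD : r ∈ D := subset_convexHull ℝ _ (by simp)
  -- upper bound helper
  have hub : ∀ (w : ℝ × ℝ) (M : ℝ), det2 p w ≤ M → det2 q w ≤ M → det2 r w ≤ M →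
      ∀ y ∈ D, det2 y w ≤ M := by
    intro w M h1 h2 h3 y hy
    have : D ⊆ {y : ℝ × ℝ | det2 y w ≤ M} := by
      apply convexHull_min ?_ (convex_halfSpace_le (det2_linear w) M)
      intro z hz
      rcases hz with h | h | h <;> subst h <;> assumption
    exact this hy
  -- gauge equals 1 at the vertices
  have hFp : gauge D p = 1 := by
    have h1 : det2 q (q - r) ≤ det2 p (q - r) := by
      simp only [det2, Prod.fst_sub, Prod.snd_sub]; nlinarith [hA', hB', hC']
    have h2 : det2 r (q - r) ≤ det2 p (q - r) := by
      simp only [det2, Prod.fst_sub, Prod.snd_sub]; nlinarith [hA', hB', hC']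
    have h3 : 0 < det2 p (q - r) := by
      simp only [det2, Prod.fst_sub, Prod.snd_sub]; nlinarith [hA', hB', hC']
    exact gauge_vertex hnhds hpD (hub (q - r) _ le_rfl h1 h2) h3
  have hFq : gauge D q = 1 := by
    have h1 : det2 p (r - p) ≤ det2 q (r - p) := by
      simp only [det2, Prod.fst_sub, Prod.snd_sub]; nlinarith [hA', hB', hC']
    have h2 : det2 r (r - p) ≤ det2 q (r - p) := by
      simp only [det2, Prod.fst_sub, Prod.snd_sub]; nlinarith [hA', hB', hC']
    have h3 : 0 < det2 q (r - p) := by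
      simp only [det2, Prod.fst_sub, Prod.snd_sub]; nlinarith [hA', hB', hC']
    exact gauge_vertex hnhds hqD (hub (r - p) _ h1 le_rfl h2) h3
  have hFr : gauge D r = 1 := by
    have h1 : det2 p (p - q) ≤ det2 r (p - q) := by
      simp only [det2, Prod.fst_sub, Prod.snd_sub]; nlinarith [hA', hB', hC']
    have h2 : det2 q (p - q) ≤ det2 r (p - q) := by
      simp only [det2, Prod.fst_sub, Prod.snd_sub]; nlinarith [hA', hB', hC']
    have h3 : 0 < det2 r (p - q) := by
      simp only [det2, Prod.fst_sub, Prod.snd_sub]; nlinarith [hA', hB', hC']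
    exact gauge_vertex hnhds hrD (hub (p - q) _ h1 h2 le_rfl) h3
  -- the sup computation
  have hsup : ∀ x : ℝ × ℝ, assocGauge (gaugeOf D) x
      = max (det2 p x) (max (det2 q x) (det2 r x)) := by
    intro x
    have hgr : IsGreatest {d : ℝ | ∃ y, gaugeOf D y = 1 ∧ d = det2 y x}
        (max (det2 p x) (max (det2 q x) (det2 r x))) := by
      constructor
      · rcases max_choice (det2 p x) (max (det2 q x) (det2 r x)) with h | h
        · exact ⟨p, hFp, h.symm ▸ h⟩
        · rcases max_choice (det2 q x) (det2 r x) with h' | h'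
          · exact ⟨q, hFq, by rw [h, h']⟩
          · exact ⟨r, hFr, by rw [h, h']⟩
      · rintro d ⟨y, hy, rfl⟩
        have hyD : y ∈ D := (hmemD y).mp (le_of_eq hy)
        exact hub x _ (le_max_left _ _)
          (le_trans (le_max_left _ _) (le_max_right _ _))
          (le_trans (le_max_right _ _) (le_max_right _ _)) y hyD
    exact hgr.csSup_eq
  constructor
  · ext x
    simp only [Set.mem_setOf_eq, hsup x, max_le_iff]
    exact ⟨fun ⟨h1, h2, h3⟩ => ⟨h1, h2, h3⟩, fun ⟨h1, h2, h3⟩ => ⟨h1, h2, h3⟩⟩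
  · -- second part: the polygon description
    set A := p.1 * q.2 - p.2 * q.1 with hAdef
    set B := q.1 * r.2 - q.2 * r.1 with hBdef
    set C := r.1 * p.2 - r.2 * p.1 with hCdef
    have hS : (0:ℝ) < A + B + C := by positivity
    have hS0 : A + B + C ≠ 0 := ne_of_gt hS
    have hA0e : p.1 * q.2 - p.2 * q.1 ≠ 0 := hA0
    have hB0e : q.1 * r.2 - q.2 * r.1 ≠ 0 := hB0
    have hC0e : r.1 * p.2 - r.2 * p.1 ≠ 0 := hC0
    have hS0e : p.1 * q.2 - p.2 * q.1 + (q.1 * r.2 - q.2 * r.1) + (r.1 * p.2 - r.2 * p.1) ≠ 0 := hS0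
    set v1 := (1 / A) • (q - p) with hv1
    set v2 := (1 / B) • (r - q) with hv2
    set v3 := (1 / C) • (p - r) with hv3
    apply Set.Subset.antisymm
    · rintro x ⟨h1, h2, h3⟩
      set l1 := A * (1 - (r.1 * x.2 - r.2 * x.1)) / (A + B + C) with hl1
      set l2 := B * (1 - (p.1 * x.2 - p.2 * x.1)) / (A + B + C) with hl2
      set l3 := C * (1 - (q.1 * x.2 - q.2 * x.1)) / (A + B + C) with hl3
      have hl1n : 0 ≤ l1 := div_nonneg (mul_nonneg hA'.le (by linarith)) hS.le
      have hl2n : 0 ≤ l2 := div_nonneg (mul_nonneg hB'.le (by linarith)) hS.le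
      have hl3n : 0 ≤ l3 := div_nonneg (mul_nonneg hC'.le (by linarith)) hS.le
      have hsum : l1 + l2 + l3 = 1 := by
        rw [hl1, hl2, hl3]
        field_simp
        simp only [hAdef, hBdef, hCdef]; ring
      have hx : x = l1 • v1 + l2 • v2 + l3 • v3 := by
        have e1 : x.1 = (l1 • v1 + l2 • v2 + l3 • v3).1 := by
          simp only [hv1, hv2, hv3, hl1, hl2, hl3,
            Prod.fst_add, Prod.smul_fst, Prod.fst_sub, smul_eq_mul]
          field_simp
          simp only [hAdef, hBdef, hCdef]; ring
        have e2 : x.2 = (l1 • v1 + l2 • v2 + l3 • v3).2 := by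
          simp only [hv1, hv2, hv3, hl1, hl2, hl3,
            Prod.snd_add, Prod.smul_snd, Prod.snd_sub, smul_eq_mul]
          field_simp
          simp only [hAdef, hBdef, hCdef]; ring
        exact Prod.ext e1 e2
      rw [hx]
      have hc : Convex ℝ (convexHull ℝ ({v1, v2, v3} : Set (ℝ × ℝ))) := convex_convexHull ℝ _
      have m1 : v1 ∈ convexHull ℝ ({v1, v2, v3} : Set (ℝ × ℝ)) := subset_convexHull ℝ _ (by simp)
      have m2 : v2 ∈ convexHull ℝ ({v1, v2, v3} : Set (ℝ × ℝ)) := subset_convexHull ℝ _ (by simp)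
      have m3 : v3 ∈ convexHull ℝ ({v1, v2, v3} : Set (ℝ × ℝ)) := subset_convexHull ℝ _ (by simp)
      have := hc.sum_mem (t := (Finset.univ : Finset (Fin 3))) (w := ![l1, l2, l3])
        (z := ![v1, v2, v3])
        (by intro i _; fin_cases i <;> simpa)
        (by rw [Fin.sum_univ_three]; simpa using hsum)
        (by intro i _; fin_cases i <;> simpa)
      rw [Fin.sum_univ_three] at this
      simpa using this
    · apply convexHull_min
      · rintro z (rfl | rfl | rfl)
        · refine ⟨le_of_eq ?_, le_of_eq ?_, ?_⟩
          · show p.1 * ((1/A) • (q - p)).2 - p.2 * ((1/A) • (q - p)).1 = 1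
            simp only [Prod.smul_snd, Prod.smul_fst, Prod.snd_sub, Prod.fst_sub, smul_eq_mul,
              hAdef]
            field_simp; ring
          · show q.1 * ((1/A) • (q - p)).2 - q.2 * ((1/A) • (q - p)).1 = 1
            simp only [Prod.smul_snd, Prod.smul_fst, Prod.snd_sub, Prod.fst_sub, smul_eq_mul]
            field_simp; simp only [hAdef]; ring
          · show r.1 * ((1/A) • (q - p)).2 - r.2 * ((1/A) • (q - p)).1 ≤ 1
            have he : r.1 * ((1/A) • (q - p)).2 - r.2 * ((1/A) • (q - p)).1 = (-B - C) / A := by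
              simp only [Prod.smul_snd, Prod.smul_fst, Prod.snd_sub, Prod.fst_sub, smul_eq_mul,
                hAdef, hBdef, hCdef]
              field_simp; ring
            rw [he, div_le_one hA']; linarith
        · refine ⟨?_, le_of_eq ?_, le_of_eq ?_⟩
          · show p.1 * ((1/B) • (r - q)).2 - p.2 * ((1/B) • (r - q)).1 ≤ 1
            have he : p.1 * ((1/B) • (r - q)).2 - p.2 * ((1/B) • (r - q)).1 = (-C - A) / B := by
              simp only [Prod.smul_snd, Prod.smul_fst, Prod.snd_sub, Prod.fst_sub, smul_eq_mul,
                hAdef, hBdef, hCdef]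
              field_simp; ring
            rw [he, div_le_one hB']; linarith
          · show q.1 * ((1/B) • (r - q)).2 - q.2 * ((1/B) • (r - q)).1 = 1
            simp only [Prod.smul_snd, Prod.smul_fst, Prod.snd_sub, Prod.fst_sub, smul_eq_mul,
              hBdef]
            field_simp; ring
          · show r.1 * ((1/B) • (r - q)).2 - r.2 * ((1/B) • (r - q)).1 = 1
            simp only [Prod.smul_snd, Prod.smul_fst, Prod.snd_sub, Prod.fst_sub, smul_eq_mul]
            field_simp; simp only [hBdef]; ring
        · refine ⟨le_of_eq ?_, ?_, le_of_eq ?_⟩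
          · show p.1 * ((1/C) • (p - r)).2 - p.2 * ((1/C) • (p - r)).1 = 1
            simp only [Prod.smul_snd, Prod.smul_fst, Prod.snd_sub, Prod.fst_sub, smul_eq_mul]
            field_simp; simp only [hCdef]; ring
          · show q.1 * ((1/C) • (p - r)).2 - q.2 * ((1/C) • (p - r)).1 ≤ 1
            have he : q.1 * ((1/C) • (p - r)).2 - q.2 * ((1/C) • (p - r)).1 = (-A - B) / C := by
              simp only [Prod.smul_snd, Prod.smul_fst, Prod.snd_sub, Prod.fst_sub, smul_eq_mul,
                hAdef, hBdef, hCdef]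
              field_simp; ring
            rw [he, div_le_one hC']; linarith
          · show r.1 * ((1/C) • (p - r)).2 - r.2 * ((1/C) • (p - r)).1 = 1
            simp only [Prod.smul_snd, Prod.smul_fst, Prod.snd_sub, Prod.fst_sub, smul_eq_mul]
            field_simp; simp only [hCdef]; ring
      · intro x hx y hy a b ha hb hab
        obtain ⟨hx1, hx2, hx3⟩ := hx
        obtain ⟨hy1, hy2, hy3⟩ := hy
        refine ⟨?_, ?_, ?_⟩ <;>
          simp only [Prod.fst_add, Prod.snd_add, Prod.smul_fst, Prod.smul_snd, smul_eq_mul] <;>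
          nlinarith [mul_le_mul_of_nonneg_left hx1 ha, mul_le_mul_of_nonneg_left hy1 hb,
            mul_le_mul_of_nonneg_left hx2 ha, mul_le_mul_of_nonneg_left hy2 hb,
            mul_le_mul_of_nonneg_left hx3 ha, mul_le_mul_of_nonneg_left hy3 hb]
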